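/- Let A = {0,1,…,N−1} be a finite alphabet and let P : A* → [0,1] be a function on finite words satisfying the consistency conditions P(b) = Σ_{a∈A} P(ba) = Σ_{a∈A} P(ab) for every word b, and Σ_{a∈A} P(a) = 1. Then there exists a unique shift-invariant Borel probability measure μ on the product space A^ℤ (with the product σ-algebra) such that μ([b]_i) = P(b) for every word b and every anchor i ∈ ℤ, where [b]_i = {x ∈ A^ℤ : x(i+j) = b_j for 0 ≤ j < |b|} is the cylinder set generated by b anchored at i. -/

import Mathlib

open MeasureTheory Finset
open scoped ENNReal

/-- The shift map on bi-infinite sequences over the alphabet `Fin N`. -/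
def shiftA (N : ℕ) (x : ℤ → Fin N) : ℤ → Fin N := fun i => x (i + 1)

/-- The cylinder set generated by the word `b` anchored at position `i`. -/
def cylA (N : ℕ) (i : ℤ) (b : List (Fin N)) : Set (ℤ → Fin N) :=
  {x | ∀ j : Fin b.length, x (i + (j.val : ℤ)) = b.get j}

namespace BlockAux

variable {N : ℕ}

/-- window projection onto coordinates `i, i+1, ..., i+L`. -/
def proj (N : ℕ) (i : ℤ) (L : ℕ) : (ℤ → Fin N) → (Fin (L+1) → Fin N) :=
  fun x j => x (i + (j : ℤ))

variable (P : List (Fin N) → ℝ)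

noncomputable def Q (b : List (Fin N)) : ℝ≥0∞ := ENNReal.ofReal (P b)

noncomputable def val {L : ℕ} (S : Finset (Fin (L+1) → Fin N)) : ℝ≥0∞ :=
  ∑ w ∈ S, Q P (List.ofFn w)

variable {P}

section cons
variable (hconsR : ∀ b : List (Fin N), b ≠ [] → P b = ∑ a : Fin N, P (b ++ [a]))
variable (hconsL : ∀ b : List (Fin N), b ≠ [] → P b = ∑ a : Fin N, P (a :: b))
variable (hrange : ∀ b : List (Fin N), b ≠ [] → 0 ≤ P b ∧ P b ≤ 1)

include hrange hconsR in
lemma QR (b : List (Fin N)) (hb : b ≠ []) : Q P b = ∑ a : Fin N, Q P (b ++ [a]) := by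
  unfold Q
  rw [hconsR b hb, ENNReal.ofReal_sum_of_nonneg]
  intro a _
  exact (hrange _ (by simp)).1

include hrange hconsL in
lemma QL (b : List (Fin N)) (hb : b ≠ []) : Q P b = ∑ a : Fin N, Q P (a :: b) := by
  unfold Q
  rw [hconsL b hb, ENNReal.ofReal_sum_of_nonneg]
  intro a _
  exact (hrange _ (by simp)).1

/-- one-step right restriction -/
def resR (N : ℕ) (L : ℕ) : (Fin (L+1+1) → Fin N) → (Fin (L+1) → Fin N) :=
  fun w j => w j.castSucc

/-- one-step left restriction -/
def resL (N : ℕ) (L : ℕ) : (Fin (L+1+1) → Fin N) → (Fin (L+1) → Fin N) :=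
  fun w j => w j.succ

lemma proj_resR (i : ℤ) (L : ℕ) : proj N i L = resR N L ∘ proj N i (L+1) := by
  funext x j
  simp [proj, resR]

lemma proj_resL (i : ℤ) (L : ℕ) : proj N i L = resL N L ∘ proj N (i-1) (L+1) := by
  funext x j
  simp only [proj, resL, Function.comp_apply, Fin.val_succ]
  congr 1
  push_cast
  ring

include hrange hconsR in
lemma val_filter_resR {L : ℕ} (S : Finset (Fin (L+1) → Fin N)) :
    val P (Finset.univ.filter (fun w => resR N L w ∈ S)) = val P S := by
  classical
  unfold val
  rw [Finset.sum_filter]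
  rw [← (Fin.snocEquiv (fun _ : Fin (L+1+1) => Fin N)).sum_comp
    (fun w => if resR N L w ∈ S then Q P (List.ofFn w) else 0)]
  rw [Fintype.sum_prod_type]
  have key : ∀ (a : Fin N) (w : Fin (L+1) → Fin N),
      (Fin.snocEquiv (fun _ : Fin (L+1+1) => Fin N)) (a, w) = Fin.snoc w a := by
    intro a w; rfl
  have hres : ∀ (a : Fin N) (w : Fin (L+1) → Fin N), resR N L (Fin.snoc w a) = w := by
    intro a w; funext j; simp [resR]
  have hofn : ∀ (a : Fin N) (w : Fin (L+1) → Fin N),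
      List.ofFn (Fin.snoc w a : Fin (L+1+1) → Fin N) = List.ofFn w ++ [a] := by
    intro a w
    rw [List.ofFn_succ' (Fin.snoc w a)]
    simp [Fin.snoc_castSucc, Fin.snoc_last, List.concat_eq_append]
  simp only [key, hres, hofn]
  rw [Finset.sum_comm]
  have step : ∀ y : Fin (L+1) → Fin N,
      (∑ x : Fin N, if y ∈ S then Q P (List.ofFn y ++ [x]) else 0)
        = if y ∈ S then Q P (List.ofFn y) else 0 := by
    intro y
    by_cases hy : y ∈ S
    · simp only [hy, if_true]
      exact (QR hconsR hrange (List.ofFn y) (by simp [← List.length_pos_iff])).symm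
    · simp [hy]
  simp only [step]
  rw [← Finset.sum_filter]
  congr 1
  simp

include hrange hconsL in
lemma val_filter_resL {L : ℕ} (S : Finset (Fin (L+1) → Fin N)) :
    val P (Finset.univ.filter (fun w => resL N L w ∈ S)) = val P S := by
  classical
  unfold val
  rw [Finset.sum_filter]
  rw [← (Fin.consEquiv (fun _ : Fin (L+1+1) => Fin N)).sum_comp
    (fun w => if resL N L w ∈ S then Q P (List.ofFn w) else 0)]
  rw [Fintype.sum_prod_type]
  have key : ∀ (a : Fin N) (w : Fin (L+1) → Fin N),
      (Fin.consEquiv (fun _ : Fin (L+1+1) => Fin N)) (a, w) = Fin.cons a w := by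
    intro a w; rfl
  have hres : ∀ (a : Fin N) (w : Fin (L+1) → Fin N), resL N L (Fin.cons a w) = w := by
    intro a w; funext j; simp [resL]
  have hofn : ∀ (a : Fin N) (w : Fin (L+1) → Fin N),
      List.ofFn (Fin.cons a w : Fin (L+1+1) → Fin N) = a :: List.ofFn w := by
    intro a w
    rw [List.ofFn_succ (f := Fin.cons a w)]
    simp
  simp only [key, hres, hofn]
  rw [Finset.sum_comm]
  have step : ∀ y : Fin (L+1) → Fin N,
      (∑ x : Fin N, if y ∈ S then Q P (x :: List.ofFn y) else 0)
        = if y ∈ S then Q P (List.ofFn y) else 0 := by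
    intro y
    by_cases hy : y ∈ S
    · simp only [hy, if_true]
      exact (QL hconsL hrange (List.ofFn y) (by simp [← List.length_pos_iff])).symm
    · simp [hy]
  simp only [step]
  rw [← Finset.sum_filter]
  congr 1
  simp

include hrange hconsR in
lemma growR (i : ℤ) (L : ℕ) (S : Finset (Fin (L+1) → Fin N)) (r : ℕ) :
    ∃ T : Finset (Fin (L + r + 1) → Fin N),
      proj N i (L + r) ⁻¹' ↑T = proj N i L ⁻¹' ↑S ∧ val P T = val P S := by
  classical
  induction r with
  | zero => exact ⟨S, rfl, rfl⟩
  | succ r ih =>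
    obtain ⟨T, hT, hvT⟩ := ih
    refine ⟨Finset.univ.filter (fun w => resR N (L+r) w ∈ T), ?_, ?_⟩
    · rw [← hT]
      have : proj N i (L + r) = resR N (L+r) ∘ proj N i (L + r + 1) := proj_resR i (L+r)
      rw [this]
      ext x
      simp only [Set.preimage_comp, Set.mem_preimage, Finset.coe_filter, Set.mem_setOf_eq,
        Finset.mem_coe, Finset.mem_filter, Finset.mem_univ, true_and]
      rfl
    · exact (val_filter_resR hconsR hrange T).trans hvT

include hrange hconsL in
lemma growL (i : ℤ) (L : ℕ) (S : Finset (Fin (L+1) → Fin N)) (a : ℕ) :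
    ∃ T : Finset (Fin (L + a + 1) → Fin N),
      proj N (i - a) (L + a) ⁻¹' ↑T = proj N i L ⁻¹' ↑S ∧ val P T = val P S := by
  classical
  induction a with
  | zero => simpa using ⟨S, rfl, rfl⟩
  | succ a ih =>
    obtain ⟨T, hT, hvT⟩ := ih
    refine ⟨Finset.univ.filter (fun w => resL N (L+a) w ∈ T), ?_, ?_⟩
    · rw [← hT]
      have : proj N (i - a) (L + a) = resL N (L+a) ∘ proj N (i - a - 1) (L + a + 1) :=
        proj_resL (i - a) (L+a)
      rw [this]
      have hcast : (i - ((a : ℤ) + 1)) = i - a - 1 := by ring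
      push_cast
      rw [hcast]
      ext x
      simp only [Set.preimage_comp, Set.mem_preimage, Finset.coe_filter, Set.mem_setOf_eq,
        Finset.mem_coe, Finset.mem_filter, Finset.mem_univ, true_and]
      rfl
    · exact (val_filter_resL hconsL hrange T).trans hvT

include hrange hconsR hconsL in
lemma growTo (i : ℤ) (L : ℕ) (S : Finset (Fin (L+1) → Fin N)) (i' : ℤ) (L' : ℕ)
    (h1 : i' ≤ i) (h2 : i + L ≤ i' + L') :
    ∃ T : Finset (Fin (L' + 1) → Fin N),
      proj N i' L' ⁻¹' ↑T = proj N i L ⁻¹' ↑S ∧ val P T = val P S := by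
  classical
  obtain ⟨a, haz⟩ : ∃ a : ℕ, (a : ℤ) = i - i' := ⟨(i - i').toNat, Int.toNat_of_nonneg (by omega)⟩
  obtain ⟨r, hL'⟩ : ∃ r : ℕ, L' = L + a + r := ⟨L' - (L + a), by omega⟩
  obtain ⟨T1, hT1, hv1⟩ := growL hconsL hrange i L S a
  obtain ⟨T2, hT2, hv2⟩ := growR hconsR hrange (i - a) (L + a) T1 r
  have hi' : i - (a : ℤ) = i' := by omega
  rw [hi'] at hT1 hT2
  subst hL'
  exact ⟨T2, hT2.trans hT1, hv2.trans hv1⟩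

include hrange hconsR hconsL in
/-- well-definedness: two presentations of the same cylinder set have the same value. -/
lemma val_eq_val (hN : 0 < N) (i : ℤ) (L : ℕ) (S : Finset (Fin (L+1) → Fin N))
    (i' : ℤ) (L' : ℕ) (S' : Finset (Fin (L'+1) → Fin N))
    (h : proj N i L ⁻¹' ↑S = proj N i' L' ⁻¹' ↑S') : val P S = val P S' := by
  classical
  obtain ⟨j, hj1, hj2⟩ : ∃ j : ℤ, j ≤ i ∧ j ≤ i' := ⟨min i i', min_le_left _ _, min_le_right _ _⟩
  obtain ⟨M, hM1, hM2⟩ : ∃ M : ℕ, i + L ≤ j + M ∧ i' + L' ≤ j + M :=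
    ⟨(max (i + L) (i' + L') - j).toNat, by omega, by omega⟩
  obtain ⟨T, hT, hv⟩ := growTo hconsR hconsL hrange i L S j M hj1 (by omega)
  obtain ⟨T', hT', hv'⟩ := growTo hconsR hconsL hrange i' L' S' j M hj2 (by omega)
  rw [← hv, ← hv']
  have hpre : proj N j M ⁻¹' ↑T = proj N j M ⁻¹' ↑T' := by rw [hT, hT', h]
  have hsurj : Function.Surjective (proj N j M) := by
    intro w
    refine ⟨fun t => if h2 : 0 ≤ t - j ∧ t - j < (M : ℤ) + 1 then w ⟨(t - j).toNat, by omega⟩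
      else ⟨0, hN⟩, ?_⟩
    funext k
    simp only [proj]
    have h2 : 0 ≤ (j + (k : ℤ)) - j ∧ (j + (k : ℤ)) - j < (M : ℤ) + 1 := by
      constructor <;> [omega; (have := k.isLt; omega)]
    rw [dif_pos h2]
    congr 1
    ext
    simp only []
    omega
  have : (↑T : Set _) = ↑T' := hsurj.preimage_injective hpre
  rw [Finset.coe_inj.mp this]

/-- cylinder sets -/
def IsCyl (N : ℕ) (s : Set (ℤ → Fin N)) : Prop :=
  ∃ (i : ℤ) (L : ℕ) (S : Finset (Fin (L+1) → Fin N)), s = proj N i L ⁻¹' ↑S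

variable (P) in
/-- the premeasure on cylinder sets (`∞` off cylinders is handled by `extend` later;
here `mval` is the infimum over presentations). -/
noncomputable def mval (s : Set (ℤ → Fin N)) : ℝ≥0∞ :=
  ⨅ (i : ℤ) (L : ℕ) (S : Finset (Fin (L+1) → Fin N)) (_ : s = proj N i L ⁻¹' ↑S), val P S

include hrange hconsR hconsL in
lemma mval_eq (hN : 0 < N) (i : ℤ) (L : ℕ) (S : Finset (Fin (L+1) → Fin N)) :
    mval P (proj N i L ⁻¹' ↑S) = val P S := by
  apply le_antisymm
  · exact iInf_le_of_le i (iInf_le_of_le L (iInf_le_of_le S (iInf_le _ rfl)))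
  · refine le_iInf fun i' => le_iInf fun L' => le_iInf fun S' => le_iInf fun h => ?_
    exact le_of_eq (val_eq_val hconsR hconsL hrange hN i L S i' L' S' h)

lemma isCyl_empty : IsCyl N (∅ : Set (ℤ → Fin N)) :=
  ⟨0, 0, ∅, by simp⟩

lemma isCyl_univ : IsCyl N (Set.univ : Set (ℤ → Fin N)) :=
  ⟨0, 0, Finset.univ, by simp⟩

include hrange hconsR hconsL in
lemma mval_empty (hN : 0 < N) : mval P (∅ : Set (ℤ → Fin N)) = 0 := by
  have : (∅ : Set (ℤ → Fin N)) = proj N 0 0 ⁻¹' ↑(∅ : Finset (Fin (0+1) → Fin N)) := by simp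
  rw [this, mval_eq hconsR hconsL hrange hN]
  simp [val]

include hrange hconsR hconsL in
/-- common window presentation for a finite family of cylinder sets. -/
lemma commonFam {ι : Type} (F : Finset ι) (t : ι → Set (ℤ → Fin N))
    (h : ∀ k ∈ F, IsCyl N (t k)) :
    ∃ (i : ℤ) (L : ℕ) (T : ι → Finset (Fin (L+1) → Fin N)),
      ∀ k ∈ F, t k = proj N i L ⁻¹' ↑(T k) := by
  classical
  rcases F.eq_empty_or_nonempty with rfl | hF
  · exact ⟨0, 0, fun _ => ∅, by simp⟩
  choose I L S hS using fun (k : ι) (hk : k ∈ F) => h k hk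
  set i : ℤ := F.inf' hF (fun k => if hk : k ∈ F then I k hk else 0) with hi
  set e : ℤ := F.sup' hF (fun k => if hk : k ∈ F then I k hk + L k hk else 0) with he
  have hie : i ≤ e := by
    obtain ⟨k, hk⟩ := hF
    calc i ≤ _ := Finset.inf'_le _ hk
    _ ≤ _ := by
      refine le_trans ?_ (Finset.le_sup' (b := k) _ hk)
      simp only [hk, dif_pos]
      have : (0 : ℤ) ≤ L k hk := Int.ofNat_nonneg _
      omega
  obtain ⟨M, hM⟩ : ∃ M : ℕ, (M : ℤ) = e - i := ⟨(e - i).toNat, Int.toNat_of_nonneg (by omega)⟩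
  have key : ∀ k (hk : k ∈ F), ∃ T : Finset (Fin (M+1) → Fin N),
      proj N i M ⁻¹' ↑T = proj N (I k hk) (L k hk) ⁻¹' ↑(S k hk) := by
    intro k hk
    have h1 : i ≤ I k hk := by
      refine le_trans (Finset.inf'_le _ hk) ?_
      simp [hk]
    have h2 : I k hk + L k hk ≤ i + M := by
      have := Finset.le_sup' (fun k' => if hk' : k' ∈ F then I k' hk' + L k' hk' else 0) hk
      simp only [hk, dif_pos] at this
      omega
    obtain ⟨T, hT, _⟩ := growTo hconsR hconsL hrange (I k hk) (L k hk) (S k hk) i M h1 h2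
    exact ⟨T, hT⟩
  choose T hT using key
  refine ⟨i, M, fun k => if hk : k ∈ F then T k hk else ∅, fun k hk => ?_⟩
  simp only [dif_pos hk]
  rw [hT k hk, ← hS k hk]

lemma sum_biUnion_le' {ι β : Type*} [DecidableEq β] (F : Finset ι) (g : ι → Finset β)
    (f : β → ℝ≥0∞) :
    ∑ w ∈ F.biUnion g, f w ≤ ∑ k ∈ F, ∑ w ∈ g k, f w := by
  classical
  induction F using Finset.induction with
  | empty => simp
  | @insert k G hk ih =>
    rw [Finset.biUnion_insert, Finset.sum_insert hk]
    calc ∑ w ∈ g k ∪ G.biUnion g, f w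
        ≤ ∑ w ∈ g k, f w + ∑ w ∈ G.biUnion g, f w :=
          le_trans le_self_add (le_of_eq (Finset.sum_union_inter))
      _ ≤ _ := add_le_add le_rfl ih

lemma cyl_isOpen (i : ℤ) (L : ℕ) (S : Finset (Fin (L+1) → Fin N)) :
    IsOpen (proj N i L ⁻¹' ↑S) := by
  have hc : Continuous (proj N i L) :=
    continuous_pi fun j => continuous_apply (i + (j : ℤ))
  exact (isOpen_discrete _).preimage hc

lemma cyl_isClosed (i : ℤ) (L : ℕ) (S : Finset (Fin (L+1) → Fin N)) :
    IsClosed (proj N i L ⁻¹' ↑S) := by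
  have hc : Continuous (proj N i L) :=
    continuous_pi fun j => continuous_apply (i + (j : ℤ))
  exact (isClosed_discrete _).preimage hc

lemma proj_surj (hN : 0 < N) (i : ℤ) (L : ℕ) : Function.Surjective (proj N i L) := by
  intro w
  refine ⟨fun t => if h2 : 0 ≤ t - i ∧ t - i < (L : ℤ) + 1 then w ⟨(t - i).toNat, by omega⟩
    else ⟨0, hN⟩, ?_⟩
  funext k
  simp only [proj]
  have h2 : 0 ≤ (i + (k : ℤ)) - i ∧ (i + (k : ℤ)) - i < (L : ℤ) + 1 := by
    constructor <;> [omega; (have := k.isLt; omega)]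
  rw [dif_pos h2]
  congr 1
  ext
  simp only []
  omega

include hrange hconsR hconsL in
/-- evaluation of the induced outer measure on cylinders. -/
lemma om_eval (hN : 0 < N) (h0 : mval P (∅ : Set (ℤ → Fin N)) = 0)
    (i : ℤ) (L : ℕ) (S : Finset (Fin (L+1) → Fin N)) :
    OuterMeasure.ofFunction (mval P) h0 (proj N i L ⁻¹' ↑S) = val P S := by
  classical
  apply le_antisymm
  · exact (OuterMeasure.ofFunction_le _).trans_eq (mval_eq hconsR hconsL hrange hN i L S)
  · rw [OuterMeasure.ofFunction_apply]
    refine le_iInf fun f => le_iInf fun hf => ?_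
    by_cases hc : ∀ n, IsCyl N (f n)
    · -- compactness: finite subcover
      have hopen : ∀ n, IsOpen (f n) := by
        intro n
        obtain ⟨i', L', S', hS'⟩ := hc n
        rw [hS']; exact cyl_isOpen i' L' S'
      have hcompact : IsCompact (proj N i L ⁻¹' ↑S) := (cyl_isClosed i L S).isCompact
      obtain ⟨F, hF⟩ := hcompact.elim_finite_subcover f hopen hf
      -- common window for the finite family
      obtain ⟨i₀, L₀, T, hT⟩ := commonFam hconsR hconsL hrange F f (fun k _ => hc k)
      obtain ⟨j, hj1, hj2⟩ : ∃ j : ℤ, j ≤ i ∧ j ≤ i₀ :=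
        ⟨min i i₀, min_le_left _ _, min_le_right _ _⟩
      obtain ⟨M, hM1, hM2⟩ : ∃ M : ℕ, i + L ≤ j + M ∧ i₀ + L₀ ≤ j + M :=
        ⟨(max (i + L) (i₀ + L₀) - j).toNat, by omega, by omega⟩
      obtain ⟨S', hS'pre, hS'val⟩ :=
        growTo hconsR hconsL hrange i L S j M hj1 (by omega)
      have keyT : ∀ k (_ : k ∈ F), ∃ T' : Finset (Fin (M+1) → Fin N),
          proj N j M ⁻¹' ↑T' = proj N i₀ L₀ ⁻¹' ↑(T k) ∧ val P T' = val P (T k) := by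
        intro k _
        exact growTo hconsR hconsL hrange i₀ L₀ (T k) j M hj2 (by omega)
      choose T' hT'pre hT'val using keyT
      -- subset at the common window
      have hsub : S' ⊆ F.biUnion (fun k => if hk : k ∈ F then T' k hk else ∅) := by
        intro w hw
        obtain ⟨x, hx⟩ := proj_surj hN j M w
        have hxS : x ∈ proj N i L ⁻¹' ↑S := by
          rw [← hS'pre]; simp only [Set.mem_preimage, hx]; exact hw
        have := hF hxS
        simp only [Set.mem_iUnion] at this
        obtain ⟨k, hk, hxk⟩ := this
        rw [hT k hk, ← hT'pre k hk] at hxk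
        simp only [Set.mem_preimage, hx, Finset.mem_coe] at hxk
        rw [Finset.mem_biUnion]
        exact ⟨k, hk, by simp only [dif_pos hk]; exact hxk⟩
      calc val P S = val P S' := hS'val.symm
        _ ≤ ∑ w ∈ F.biUnion (fun k => if hk : k ∈ F then T' k hk else ∅), Q P (List.ofFn w) :=
            Finset.sum_le_sum_of_subset hsub
        _ ≤ ∑ k ∈ F, val P (if hk : k ∈ F then T' k hk else ∅) :=
            sum_biUnion_le' F _ _
        _ = ∑ k ∈ F, mval P (f k) := by
            refine Finset.sum_congr rfl fun k hk => ?_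
            simp only [dif_pos hk]
            rw [hT'val k hk, hT k hk, ← mval_eq hconsR hconsL hrange hN i₀ L₀ (T k)]
        _ ≤ ∑' n, mval P (f n) := ENNReal.sum_le_tsum F
    · push_neg at hc
      obtain ⟨n, hn⟩ := hc
      have : mval P (f n) = ⊤ := by
        refine le_antisymm le_top (le_iInf fun i' => le_iInf fun L' => le_iInf fun S' =>
          le_iInf fun hs => absurd ⟨i', L', S', hs⟩ hn)
      calc val P S ≤ ⊤ := le_top
        _ = mval P (f n) := this.symm
        _ ≤ ∑' n, mval P (f n) := ENNReal.le_tsum n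

include hrange hconsR hconsL in
lemma common2 (s u : Set (ℤ → Fin N)) (hs : IsCyl N s) (hu : IsCyl N u) :
    ∃ (i : ℤ) (L : ℕ) (S U : Finset (Fin (L+1) → Fin N)),
      s = proj N i L ⁻¹' ↑S ∧ u = proj N i L ⁻¹' ↑U := by
  classical
  obtain ⟨i, L, T, hT⟩ := commonFam hconsR hconsL hrange (Finset.univ : Finset Bool)
    (fun b => if b then s else u) (by rintro (_|_) _ <;> simpa)
  exact ⟨i, L, T true, T false, by simpa using hT true (Finset.mem_univ _),
    by simpa using hT false (Finset.mem_univ _)⟩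

include hrange hconsR hconsL in
lemma om_inter_diff (hN : 0 < N) (h0 : mval P (∅ : Set (ℤ → Fin N)) = 0)
    (s u : Set (ℤ → Fin N)) (hs : IsCyl N s) (hu : IsCyl N u) :
    OuterMeasure.ofFunction (mval P) h0 (u ∩ s) + OuterMeasure.ofFunction (mval P) h0 (u \ s)
      = mval P u := by
  classical
  obtain ⟨i, L, S, U, rfl, rfl⟩ := common2 hconsR hconsL hrange s u hs hu
  have h1 : proj N i L ⁻¹' ↑U ∩ proj N i L ⁻¹' ↑S = proj N i L ⁻¹' ↑(U ∩ S) := by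
    rw [Finset.coe_inter, Set.preimage_inter]
  have h2 : proj N i L ⁻¹' ↑U \ proj N i L ⁻¹' ↑S = proj N i L ⁻¹' ↑(U \ S) := by
    rw [Finset.coe_sdiff, Set.preimage_diff]
  rw [h1, h2, om_eval hconsR hconsL hrange hN h0, om_eval hconsR hconsL hrange hN h0,
    mval_eq hconsR hconsL hrange hN]
  unfold val
  rw [← Finset.sum_union (Finset.disjoint_left.mpr (by intro a ha hb; simp at ha hb; tauto))]
  congr 1
  ext a
  simp only [Finset.mem_union, Finset.mem_inter, Finset.mem_sdiff]
  tauto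

include hrange hconsR hconsL in
lemma om_caratheodory (hN : 0 < N) (h0 : mval P (∅ : Set (ℤ → Fin N)) = 0)
    (s : Set (ℤ → Fin N)) (hs : IsCyl N s) :
    MeasurableSet[(OuterMeasure.ofFunction (mval P) h0).caratheodory] s := by
  classical
  rw [OuterMeasure.isCaratheodory_iff_le]
  intro t
  conv_rhs => rw [OuterMeasure.ofFunction_apply]
  refine le_iInf fun f => le_iInf fun hf => ?_
  by_cases hc : ∀ n, IsCyl N (f n)
  · set om := OuterMeasure.ofFunction (mval P) h0 with hom
    have hts : om (t ∩ s) ≤ ∑' n, om (f n ∩ s) := by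
      refine le_trans (measure_mono ?_) (measure_iUnion_le _)
      rw [← Set.iUnion_inter]
      exact Set.inter_subset_inter_left _ hf
    have htd : om (t \ s) ≤ ∑' n, om (f n \ s) := by
      refine le_trans (measure_mono ?_) (measure_iUnion_le _)
      rw [← Set.iUnion_diff]
      exact Set.diff_subset_diff_left hf
    calc om (t ∩ s) + om (t \ s) ≤ (∑' n, om (f n ∩ s)) + ∑' n, om (f n \ s) :=
          add_le_add hts htd
      _ = ∑' n, (om (f n ∩ s) + om (f n \ s)) := (ENNReal.tsum_add).symm
      _ = ∑' n, mval P (f n) := by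
          refine tsum_congr fun n => ?_
          exact om_inter_diff hconsR hconsL hrange hN h0 s (f n) hs (hc n)
  · push_neg at hc
    obtain ⟨n, hn⟩ := hc
    have : mval P (f n) = ⊤ :=
      le_antisymm le_top (le_iInf fun i' => le_iInf fun L' => le_iInf fun S' =>
        le_iInf fun hs' => absurd ⟨i', L', S', hs'⟩ hn)
    calc _ ≤ ⊤ := le_top
      _ = mval P (f n) := this.symm
      _ ≤ ∑' n, mval P (f n) := ENNReal.le_tsum n

lemma measurableSet_cyl (i : ℤ) (L : ℕ) (S : Finset (Fin (L+1) → Fin N)) :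
    MeasurableSet (proj N i L ⁻¹' ↑S) := by
  have hm : Measurable (proj N i L) :=
    measurable_pi_lambda _ fun j => measurable_pi_apply _
  exact hm S.finite_toSet.measurableSet

lemma pi_le_of_cyl {m' : MeasurableSpace (ℤ → Fin N)}
    (h : ∀ s, IsCyl N s → m'.MeasurableSet' s) :
    (MeasurableSpace.pi : MeasurableSpace (ℤ → Fin N)) ≤ m' := by
  classical
  refine iSup_le fun i => ?_
  intro s hs
  obtain ⟨E, -, rfl⟩ := hs
  refine h _ ⟨i, 0, Finset.univ.filter (fun w => w 0 ∈ E), ?_⟩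
  ext x
  simp [proj]

lemma pi_eq_generateFrom :
    (MeasurableSpace.pi : MeasurableSpace (ℤ → Fin N))
      = MeasurableSpace.generateFrom {s | IsCyl N s} := by
  apply le_antisymm
  · exact pi_le_of_cyl fun s hs => MeasurableSpace.measurableSet_generateFrom hs
  · refine MeasurableSpace.generateFrom_le ?_
    rintro s ⟨i, L, S, rfl⟩
    exact measurableSet_cyl i L S

lemma cylA_eq_proj (i : ℤ) (L : ℕ) (w : Fin (L+1) → Fin N) :
    cylA N i (List.ofFn w) = proj N i L ⁻¹' {w} := by
  ext x
  simp only [cylA, Set.mem_setOf_eq, Set.mem_preimage, Set.mem_singleton_iff]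
  constructor
  · intro h
    funext j
    have := h (Fin.cast (List.length_ofFn (f := w)).symm j)
    rw [List.get_ofFn] at this
    simpa [proj] using this
  · intro h j
    rw [List.get_ofFn]
    have := congrFun h (Fin.cast (List.length_ofFn (f := w)) j)
    simpa [proj] using this

lemma ofFn_ne_nil {L : ℕ} (w : Fin (L+1) → Fin N) : List.ofFn w ≠ [] := by
  simp [← List.length_pos_iff]

variable (P) in
lemma measure_eval (ν : Measure (ℤ → Fin N))
    (hcyl : ∀ b : List (Fin N), b ≠ [] → ∀ i : ℤ, ν (cylA N i b) = ENNReal.ofReal (P b))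
    (i : ℤ) (L : ℕ) (S : Finset (Fin (L+1) → Fin N)) :
    ν (proj N i L ⁻¹' ↑S) = val P S := by
  classical
  have hdecomp : proj N i L ⁻¹' ↑S = ⋃ w ∈ S, proj N i L ⁻¹' {w} := by
    ext x; simp
  rw [hdecomp, measure_biUnion_finset ?_ ?_]
  · refine Finset.sum_congr rfl fun w _ => ?_
    rw [← cylA_eq_proj, hcyl _ (ofFn_ne_nil w) i]
    rfl
  · intro w _ w' _ hww
    refine Set.disjoint_left.mpr fun x hx hx' => hww ?_
    simp only [Set.mem_preimage, Set.mem_singleton_iff] at hx hx'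
    rw [← hx, ← hx']
  · intro w _
    have : ({w} : Set (Fin (L+1) → Fin N)) = ↑({w} : Finset _) := by simp
    rw [this]
    exact measurableSet_cyl i L {w}

lemma shift_preimage_cyl (i : ℤ) (L : ℕ) (S : Finset (Fin (L+1) → Fin N)) :
    shiftA N ⁻¹' (proj N i L ⁻¹' ↑S) = proj N (i+1) L ⁻¹' ↑S := by
  have hc : proj N i L ∘ shiftA N = proj N (i+1) L := by
    funext x j
    simp only [proj, shiftA, Function.comp_apply]
    congr 1
    ring
  rw [← Set.preimage_comp, hc]

lemma measurable_shiftA : Measurable (shiftA N) :=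
  measurable_pi_lambda _ fun i => measurable_pi_apply (i + 1)

end cons

end BlockAux


open BlockAux in
theorem exists_unique_shift_invariant_measure_of_block_probabilities
    (N : ℕ) (hN : 0 < N) (P : List (Fin N) → ℝ)
    (hrange : ∀ b : List (Fin N), b ≠ [] → 0 ≤ P b ∧ P b ≤ 1)
    (hconsR : ∀ b : List (Fin N), b ≠ [] → P b = ∑ a : Fin N, P (b ++ [a]))
    (hconsL : ∀ b : List (Fin N), b ≠ [] → P b = ∑ a : Fin N, P (a :: b))
    (hnorm : ∑ a : Fin N, P [a] = 1) :
    ∃! μ : Measure (ℤ → Fin N),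
      IsProbabilityMeasure μ ∧ μ.map (shiftA N) = μ ∧
        ∀ b : List (Fin N), b ≠ [] → ∀ i : ℤ, μ (cylA N i b) = ENNReal.ofReal (P b) := by
  classical
  have h0 : mval P (∅ : Set (ℤ → Fin N)) = 0 := mval_empty hconsR hconsL hrange hN
  set om := OuterMeasure.ofFunction (mval P) h0 with hom
  have hcar : (MeasurableSpace.pi : MeasurableSpace (ℤ → Fin N)) ≤ om.caratheodory :=
    pi_le_of_cyl fun s hs => by
      rcases hs with ⟨i, L, S, rfl⟩
      exact om_caratheodory hconsR hconsL hrange hN h0 _ ⟨i, L, S, rfl⟩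
  set μ := om.toMeasure hcar with hμ
  have hμeval : ∀ (i : ℤ) (L : ℕ) (S : Finset (Fin (L+1) → Fin N)),
      μ (proj N i L ⁻¹' ↑S) = val P S := by
    intro i L S
    rw [hμ, toMeasure_apply om hcar (measurableSet_cyl i L S)]
    exact om_eval hconsR hconsL hrange hN h0 i L S
  have hμcyl : ∀ b : List (Fin N), b ≠ [] → ∀ i : ℤ, μ (cylA N i b) = ENNReal.ofReal (P b) := by
    intro b hb i
    cases b with
    | nil => exact absurd rfl hb
    | cons c d =>
      set w : Fin (d.length + 1) → Fin N := fun j => (c :: d).get j with hw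
      have hofn : List.ofFn w = c :: d := List.ofFn_get (c :: d)
      have h1 : cylA N i (c :: d) = proj N i d.length ⁻¹' ↑({w} : Finset _) := by
        rw [← hofn, Finset.coe_singleton]
        exact cylA_eq_proj i d.length w
      rw [h1, hμeval]
      unfold BlockAux.val
      rw [Finset.sum_singleton, hofn]
      rfl
  have hprob : IsProbabilityMeasure μ := by
    constructor
    have huniv : (Set.univ : Set (ℤ → Fin N))
        = proj N 0 0 ⁻¹' ↑(Finset.univ : Finset (Fin (0+1) → Fin N)) := by simp
    rw [huniv, hμeval]
    unfold BlockAux.val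
    rw [← (Equiv.funUnique (Fin 1) (Fin N)).symm.sum_comp (fun w => Q P (List.ofFn w))]
    have : ∀ a : Fin N, List.ofFn ((Equiv.funUnique (Fin 1) (Fin N)).symm a) = [a] := by
      intro a; rfl
    simp only [this]
    unfold Q
    rw [← ENNReal.ofReal_sum_of_nonneg (fun a _ => (hrange [a] (by simp)).1), hnorm,
      ENNReal.ofReal_one]
  have hgen := pi_eq_generateFrom (N := N)
  have hpi : IsPiSystem {s : Set (ℤ → Fin N) | IsCyl N s} := by
    intro s hs t ht _
    obtain ⟨i, L, S, T, rfl, rfl⟩ := common2 hconsR hconsL hrange s t hs ht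
    refine ⟨i, L, S ∩ T, ?_⟩
    rw [Finset.coe_inter, Set.preimage_inter]
  have hmeasext : ∀ ν : Measure (ℤ → Fin N), IsProbabilityMeasure ν →
      (∀ b : List (Fin N), b ≠ [] → ∀ i : ℤ, ν (cylA N i b) = ENNReal.ofReal (P b)) → ν = μ := by
    intro ν hνp hνc
    refine ext_of_generate_finite _ hgen hpi ?_ ?_
    · rintro s ⟨i, L, S, rfl⟩
      rw [measure_eval P ν hνc i L S, hμeval]
    · rw [hνp.measure_univ, hprob.measure_univ]
  have hshift : μ.map (shiftA N) = μ := by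
    have hmm : Measurable (shiftA N) := measurable_shiftA
    have : IsProbabilityMeasure (μ.map (shiftA N)) := Measure.isProbabilityMeasure_map hmm.aemeasurable
    refine hmeasext _ this ?_
    intro b hb i
    cases b with
    | nil => exact absurd rfl hb
    | cons c d =>
      set w : Fin (d.length + 1) → Fin N := fun j => (c :: d).get j with hw
      have hofn : List.ofFn w = c :: d := List.ofFn_get (c :: d)
      have h1 : cylA N i (c :: d) = proj N i d.length ⁻¹' ↑({w} : Finset _) := by
        rw [← hofn, Finset.coe_singleton]
        exact cylA_eq_proj i d.length w
      rw [h1, Measure.map_apply hmm (measurableSet_cyl i d.length {w}),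
        shift_preimage_cyl, hμeval]
      have h2 : cylA N (i+1) (c :: d) = proj N (i+1) d.length ⁻¹' ↑({w} : Finset _) := by
        rw [← hofn, Finset.coe_singleton]
        exact cylA_eq_proj (i+1) d.length w
      rw [← hμeval, ← h2]
      exact hμcyl (c :: d) hb (i + 1)
  exact ⟨μ, ⟨hprob, hshift, hμcyl⟩, fun ν ⟨hν1, _, hν3⟩ => hmeasext ν hν1 hν3⟩
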